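/- Let (P, ·, [·,·], ε, α) be a Hom-Poisson color algebra and let σ : G × G → K∖{0} be a multiplier on G with associated bicharacter δ(x,y) = σ(x,y)σ(y,x)^{-1}. Then (P, ∗^σ, [·,·]^σ, εδ, α) is also a Hom-Poisson color algebra, where for homogeneous x, y one sets x ∗^σ y = σ(x,y) x·y, [x,y]^σ = σ(x,y)[x,y], and (εδ)(x,y) = ε(x,y)σ(x,y)σ(y,x)^{-1} (σ being evaluated at the degrees of x and y). Moreover, any endomorphism of (P, ·, [·,·], ε, α) (an even linear map f with f∘α = α∘f, f(x·y) = f(x)·f(y) and f([x,y]) = [f(x), f(y)] for all homogeneous x, y) is also an endomorphism of (P, ∗^σ, [·,·]^σ, εδ, α). -/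

import Mathlib

open scoped TensorProduct

variable {K G V : Type*} [Field K] [AddCommGroup G] [AddCommGroup V] [Module K V]

/-- A skew-symmetric bicharacter on the abelian group `G` with values in `K \ {0}`. -/
def IsBicharacter (ε : G → G → K) : Prop :=
  (∀ a b, ε a b ≠ 0) ∧ (∀ a b, ε a b * ε b a = 1) ∧
    (∀ a b c, ε a (b + c) = ε a b * ε a c) ∧
    (∀ a b c, ε (a + b) c = ε a c * ε b c)

/-- `μ` is an even bilinear map for the grading `ℬ`: `μ(ℬ a, ℬ b) ⊆ ℬ (a + b)`. -/
def IsEvenBilinear (ℬ : G → Submodule K V) (μ : V →ₗ[K] V →ₗ[K] V) : Prop :=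
  ∀ ⦃a b : G⦄ ⦃x y : V⦄, x ∈ ℬ a → y ∈ ℬ b → μ x y ∈ ℬ (a + b)

/-- `α` is an even linear map for the grading `ℬ`: `α(ℬ a) ⊆ ℬ a`. -/
def IsEvenLinear (ℬ : G → Submodule K V) (α : V →ₗ[K] V) : Prop :=
  ∀ ⦃a : G⦄ ⦃x : V⦄, x ∈ ℬ a → α x ∈ ℬ a

/-- `(V, μ, ε, α)` is a Hom-associative color algebra. -/
def IsHomAssociativeColor (ℬ : G → Submodule K V) (ε : G → G → K)
    (μ : V →ₗ[K] V →ₗ[K] V) (α : V →ₗ[K] V) : Prop :=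
  IsBicharacter ε ∧ IsEvenBilinear ℬ μ ∧ IsEvenLinear ℬ α ∧
    ∀ ⦃a b c : G⦄ ⦃x y z : V⦄, x ∈ ℬ a → y ∈ ℬ b → z ∈ ℬ c →
      μ (α x) (μ y z) = μ (μ x y) (α z)

/-- `(V, br, ε, α)` is a Hom-Lie color algebra. -/
def IsHomLieColor (ℬ : G → Submodule K V) (ε : G → G → K)
    (br : V →ₗ[K] V →ₗ[K] V) (α : V →ₗ[K] V) : Prop :=
  IsBicharacter ε ∧ IsEvenBilinear ℬ br ∧ IsEvenLinear ℬ α ∧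
    (∀ ⦃a b : G⦄ ⦃x y : V⦄, x ∈ ℬ a → y ∈ ℬ b → br x y = -(ε a b • br y x)) ∧
    (∀ ⦃a b c : G⦄ ⦃x y z : V⦄, x ∈ ℬ a → y ∈ ℬ b → z ∈ ℬ c →
      ε c a • br (α x) (br y z) + ε a b • br (α y) (br z x) +
        ε b c • br (α z) (br x y) = 0)

/-- `(V, μ, br, ε, α)` is a Hom-Poisson color algebra. -/
def IsHomPoissonColor (ℬ : G → Submodule K V) (ε : G → G → K)
    (μ br : V →ₗ[K] V →ₗ[K] V) (α : V →ₗ[K] V) : Prop :=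
  IsHomAssociativeColor ℬ ε μ α ∧ IsHomLieColor ℬ ε br α ∧
    ∀ ⦃a b c : G⦄ ⦃x y z : V⦄, x ∈ ℬ a → y ∈ ℬ b → z ∈ ℬ c →
      br (α x) (μ y z) = μ (br x y) (α z) + ε a b • μ (α y) (br x z)

section Aux
variable {K G : Type*} [Field K] [AddCommGroup G]

lemma sig_core (σ : G → G → K)
    (hmul : ∀ a b c, σ a (b + c) * σ b c = σ a b * σ (a + b) c) (a b c : G) :
    σ b a * σ b c * σ a (b + c) = σ a b * σ a c * σ b (a + c) := by
  have h1 := hmul a b c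
  have h2 := hmul b a c
  rw [add_comm b a] at h2
  linear_combination σ b a * h1 - σ a b * h2

lemma sig_key1 (σ : G → G → K) (hne : ∀ a b, σ a b ≠ 0)
    (hmul : ∀ a b c, σ a (b + c) * σ b c = σ a b * σ (a + b) c) (a b c : G) :
    σ a (b + c) * (σ b a * σ c a) = σ (b + c) a * (σ a b * σ a c) := by
  have h3 := hmul b c a
  rw [add_comm c a] at h3
  have hc := sig_core σ hmul a b c
  apply mul_right_cancel₀ (hne b c)
  linear_combination σ c a * hc + σ a b * σ a c * h3

end Aux

/-- twisting a Hom-Poisson color algebra by a multiplier `σ`,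
replacing the bicharacter `ε` by `εδ` where `δ(x,y) = σ(x,y) σ(y,x)⁻¹`, yields a
Hom-Poisson color algebra; moreover every endomorphism of the original algebra
is an endomorphism of the twisted one. -/
theorem stmt3 (ℬ : G → Submodule K V) (ε : G → G → K)
    (μ br : V →ₗ[K] V →ₗ[K] V) (α : V →ₗ[K] V)
    (hP : IsHomPoissonColor ℬ ε μ br α)
    (σ : G → G → K) (hne : ∀ a b, σ a b ≠ 0)
    (hmul : ∀ a b c, σ a (b + c) * σ b c = σ a b * σ (a + b) c)
    (μ' br' : V →ₗ[K] V →ₗ[K] V)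
    (hμ' : ∀ ⦃a b : G⦄ ⦃x y : V⦄, x ∈ ℬ a → y ∈ ℬ b → μ' x y = σ a b • μ x y)
    (hbr' : ∀ ⦃a b : G⦄ ⦃x y : V⦄, x ∈ ℬ a → y ∈ ℬ b → br' x y = σ a b • br x y) :
    IsHomPoissonColor ℬ (fun a b => ε a b * (σ a b * (σ b a)⁻¹)) μ' br' α ∧
      ∀ f : V →ₗ[K] V, IsEvenLinear ℬ f → f.comp α = α.comp f →
        (∀ ⦃a b : G⦄ ⦃x y : V⦄, x ∈ ℬ a → y ∈ ℬ b → f (μ x y) = μ (f x) (f y)) →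
        (∀ ⦃a b : G⦄ ⦃x y : V⦄, x ∈ ℬ a → y ∈ ℬ b → f (br x y) = br (f x) (f y)) →
        (f.comp α = α.comp f ∧
          (∀ ⦃a b : G⦄ ⦃x y : V⦄, x ∈ ℬ a → y ∈ ℬ b →
            f (μ' x y) = μ' (f x) (f y)) ∧
          (∀ ⦃a b : G⦄ ⦃x y : V⦄, x ∈ ℬ a → y ∈ ℬ b →
            f (br' x y) = br' (f x) (f y))) := by
  obtain ⟨⟨⟨hεne, hεsk, hεr, hεl⟩, hμe, hα, hassoc⟩, ⟨_, hbre, _, hskew, hjac⟩, hleib⟩ := hP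
  set ε' : G → G → K := fun a b => ε a b * (σ a b * (σ b a)⁻¹) with hε'
  have hbic : IsBicharacter ε' := by
    refine ⟨fun a b => mul_ne_zero (hεne a b)
      (mul_ne_zero (hne a b) (inv_ne_zero (hne b a))), ?_, ?_, ?_⟩
    · intro a b
      have h := hεsk a b
      simp only [hε']
      field_simp [hne a b, hne b a]
      linear_combination h
    · intro a b c
      have k := sig_key1 σ hne hmul a b c
      have h := hεr a b c
      simp only [hε']
      rw [h]
      field_simp [hne b a, hne c a, hne (b + c) a]
      linear_combination ε a b * ε a c * k
    · intro a b c
      have k := sig_key1 σ hne hmul c a b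
      have h := hεl a b c
      simp only [hε']
      rw [h]
      field_simp [hne c a, hne c b, hne c (a + b)]
      linear_combination (-(ε a c * ε b c)) * k
  have hμ'e : IsEvenBilinear ℬ μ' := fun a b x y hx hy => by
    rw [hμ' hx hy]; exact Submodule.smul_mem _ _ (hμe hx hy)
  have hbr'e : IsEvenBilinear ℬ br' := fun a b x y hx hy => by
    rw [hbr' hx hy]; exact Submodule.smul_mem _ _ (hbre hx hy)
  refine ⟨⟨⟨hbic, hμ'e, hα, ?_⟩, ⟨hbic, hbr'e, hα, ?_, ?_⟩, ?_⟩, ?_⟩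
  · -- Hom-associativity
    intro a b c x y z hx hy hz
    rw [hμ' hy hz, map_smul, hμ' (hα hx) (hμe hy hz),
        hμ' hx hy, LinearMap.map_smul₂, hμ' (hμe hx hy) (hα hz),
        hassoc hx hy hz, smul_smul, smul_smul]
    congr 1
    linear_combination hmul a b c
  · -- skew-symmetry
    intro a b x y hx hy
    rw [hbr' hx hy, hbr' hy hx, hskew hx hy, smul_neg, smul_smul, smul_smul]
    congr 2
    simp only [hε']
    field_simp [hne b a]
  · -- Jacobi
    intro a b c x y z hx hy hz
    rw [hbr' hy hz, map_smul, hbr' (hα hx) (hbre hy hz),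
        hbr' hz hx, map_smul, hbr' (hα hy) (hbre hz hx),
        hbr' hx hy, map_smul, hbr' (hα hz) (hbre hx hy)]
    have hJ := hjac hx hy hz
    set lam : K := σ c a * (σ a c)⁻¹ * (σ b c * σ a (b + c)) with hlam
    have e1 : ε' c a • σ b c • σ a (b + c) • br (α x) (br y z)
        = lam • ε c a • br (α x) (br y z) := by
      rw [smul_smul, smul_smul, smul_smul]
      congr 1
      simp only [hε', hlam]; ring
    have e2 : ε' a b • σ c a • σ b (c + a) • br (α y) (br z x)
        = lam • ε a b • br (α y) (br z x) := by
      rw [smul_smul, smul_smul, smul_smul]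
      congr 1
      have hc := sig_core σ hmul a b c
      rw [add_comm c a]
      simp only [hε', hlam]
      field_simp [hne b a, hne a c]
      linear_combination (-(ε a b * σ c a)) * hc
    have e3 : ε' b c • σ a b • σ c (a + b) • br (α z) (br x y)
        = lam • ε b c • br (α z) (br x y) := by
      rw [smul_smul, smul_smul, smul_smul]
      congr 1
      have hc := sig_core σ hmul a c b
      rw [add_comm c b] at hc
      simp only [hε', hlam]
      field_simp [hne c b, hne a c]
      linear_combination (-(ε b c * σ b c)) * hc
    rw [e1, e2, e3, ← smul_add, ← smul_add, hJ, smul_zero]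
  · -- Leibniz
    intro a b c x y z hx hy hz
    rw [hμ' hy hz, map_smul, hbr' (hα hx) (hμe hy hz),
        hbr' hx hy, LinearMap.map_smul₂, hμ' (hbre hx hy) (hα hz),
        hbr' hx hz, map_smul, hμ' (hα hy) (hbre hx hz),
        hleib hx hy hz, smul_smul, smul_add, smul_smul, smul_smul, smul_smul,
        smul_smul]
    congr 1
    · congr 1
      linear_combination hmul a b c
    · congr 1
      have hc := sig_core σ hmul a b c
      simp only [hε']
      field_simp [hne b a]
      linear_combination ε a b * hc
  · -- endomorphisms
    intro f hfe hfα hfμ hfbr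
    refine ⟨hfα, ?_, ?_⟩
    · intro a b x y hx hy
      rw [hμ' hx hy, map_smul, hfμ hx hy, hμ' (hfe hx) (hfe hy)]
    · intro a b x y hx hy
      rw [hbr' hx hy, map_smul, hfbr hx hy, hbr' (hfe hx) (hfe hy)]
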